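/- Let G be a topological group acting properly and continuously on a nonempty connected topological space X (proper means the map G × X → X × X, (g,x) ↦ (g • x, x), is proper). Suppose there is an open subset U ⊆ X with compact closure such that ⋃_{g ∈ G} g • U = X. Then G is compactly generated: there exists a compact subset S ⊆ G whose subgroup closure is all of G. -/

import Mathlib

open Pointwise

/-- If a topological group `G` acts properly and continuously on a nonempty connected space `X`
and there is an open relatively compact `U ⊆ X` whose translates cover `X`, then `G` is
compactly generated. -/
theorem stmt3 {G X : Type*} [Group G] [TopologicalSpace G] [IsTopologicalGroup G]
    [TopologicalSpace X] [MulAction G X]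
    (hproper : IsProperMap (fun p : G × X => (p.1 • p.2, p.2)))
    (hne : Nonempty X) (hconn : ConnectedSpace X)
    (U : Set X) (hUopen : IsOpen U) (hUcl : IsCompact (closure U))
    (hcover : ⋃ g : G, g • U = Set.univ) :
    ∃ S : Set G, IsCompact S ∧ Subgroup.closure S = ⊤ := by
  -- continuity of the action
  have hcont : Continuous (fun p : G × X => p.1 • p.2) :=
    continuous_fst.comp hproper.continuous
  have hsmul : ∀ g : G, Continuous (fun x : X => g • x) := fun g =>
    hcont.comp (continuous_const.prodMk continuous_id)
  -- U is nonempty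
  obtain ⟨x₀⟩ := hne
  have hx₀ : x₀ ∈ ⋃ g : G, g • U := by rw [hcover]; trivial
  obtain ⟨g₀, hg₀⟩ := Set.mem_iUnion.mp hx₀
  have hUne : U.Nonempty := by
    rcases hg₀ with ⟨u, hu, -⟩
    exact ⟨u, hu⟩
  set K := closure U with hK
  have hUK : U ⊆ K := subset_closure
  set S : Set G := {g : G | ((g • K) ∩ K).Nonempty} with hS
  -- S is compact
  have hScompact : IsCompact S := by
    have hT : IsCompact ((fun p : G × X => (p.1 • p.2, p.2)) ⁻¹' (K ×ˢ K)) :=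
      hproper.isCompact_preimage (hUcl.prod hUcl)
    have himg : Prod.fst '' ((fun p : G × X => (p.1 • p.2, p.2)) ⁻¹' (K ×ˢ K)) = S := by
      ext g
      constructor
      · rintro ⟨⟨g', x⟩, hx, rfl⟩
        simp only [Set.mem_preimage, Set.mem_prod] at hx
        exact ⟨g' • x, Set.smul_mem_smul_set hx.2, hx.1⟩
      · rintro ⟨y, ⟨x, hxK, rfl⟩, hyK⟩
        exact ⟨(g, x), by simp [hxK, hyK], rfl⟩
    rw [← himg]
    exact hT.image continuous_fst
  refine ⟨S, hScompact, ?_⟩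
  set H := Subgroup.closure S with hH
  -- key lemma: overlapping translates give membership transfer
  have key : ∀ a b : G, ((a • U) ∩ (b • U)).Nonempty → a ∈ H → b ∈ H := by
    rintro a b ⟨x, hxa, hxb⟩ haH
    have h1 : a⁻¹ • x ∈ U := by
      rcases hxa with ⟨u, hu, rfl⟩; simpa using hu
    have h2 : b⁻¹ • x ∈ U := by
      rcases hxb with ⟨u, hu, rfl⟩; simpa using hu
    have hmem : (b⁻¹ * a) ∈ S := by
      refine ⟨b⁻¹ • x, ⟨a⁻¹ • x, hUK h1, ?_⟩, hUK h2⟩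
      show (b⁻¹ * a) • (a⁻¹ • x) = b⁻¹ • x
      rw [smul_smul]
      congr 1
      group
    have hba : (b⁻¹ * a) ∈ H := Subgroup.subset_closure hmem
    have : a * (b⁻¹ * a)⁻¹ ∈ H := H.mul_mem haH (H.inv_mem hba)
    simpa [mul_assoc] using this
  -- the union of H-translates of U is clopen
  set V : Set X := ⋃ h ∈ (H : Set G), h • U with hV
  have hVopen : IsOpen V := by
    refine isOpen_biUnion fun h _ => ?_
    have : (fun x : X => h⁻¹ • x) ⁻¹' U = h • U := by
      ext y
      simp [Set.mem_smul_set_iff_inv_smul_mem]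
    rw [← this]
    exact hUopen.preimage (hsmul h⁻¹)
  have hVcompl : Vᶜ = ⋃ g ∈ ((H : Set G))ᶜ, g • U := by
    ext y
    constructor
    · intro hy
      have : y ∈ ⋃ g : G, g • U := by rw [hcover]; trivial
      obtain ⟨g, hg⟩ := Set.mem_iUnion.mp this
      have hgH : g ∉ (H : Set G) := by
        intro hgH
        exact hy (Set.mem_biUnion hgH hg)
      exact Set.mem_biUnion hgH hg
    · intro hy hyV
      obtain ⟨g, hgH, hg⟩ := Set.mem_iUnion₂.mp hy
      obtain ⟨h, hhH, hh⟩ := Set.mem_iUnion₂.mp hyV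
      exact hgH (key h g ⟨y, hh, hg⟩ hhH)
  have hVclosed : IsClosed V := by
    rw [← isOpen_compl_iff, hVcompl]
    refine isOpen_biUnion fun g _ => ?_
    have : (fun x : X => g⁻¹ • x) ⁻¹' U = g • U := by
      ext y
      simp [Set.mem_smul_set_iff_inv_smul_mem]
    rw [← this]
    exact hUopen.preimage (hsmul g⁻¹)
  have hVne : V.Nonempty := by
    obtain ⟨u, hu⟩ := hUne
    refine ⟨u, Set.mem_biUnion H.one_mem ?_⟩
    simpa using hu
  have hVuniv : V = Set.univ := IsClopen.eq_univ ⟨hVclosed, hVopen⟩ hVne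
  -- conclude
  rw [eq_top_iff]
  intro g _
  obtain ⟨u, hu⟩ := hUne
  have hgu : g • u ∈ V := by rw [hVuniv]; trivial
  obtain ⟨h, hhH, hh⟩ := Set.mem_iUnion₂.mp hgu
  exact key h g ⟨g • u, hh, Set.smul_mem_smul_set hu⟩ hhH
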